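/- For a Boolean function f: 𝔽₂ⁿ → 𝔽₂ with algebraic normal form coefficients g_f(a) (a ∈ 𝔽₂ⁿ), and for any a with wt(a) ≥ 1, the coefficient satisfies g_f(a) ≡ 2^{wt(a)−1} − 2^{wt(a)−n−1} Σ_{b ⪯ (a+𝟏)} W_f(b) (mod 2), where the sum is over all b ∈ 𝔽₂ⁿ with b_i ≤ (a+𝟏)_i for all i. -/

import Mathlib

open Finset

abbrev V (n : ℕ) : Type := Fin n → ZMod 2

def dotp {n : ℕ} (u y : V n) : ZMod 2 := ∑ i, u i * y i

def IsAPN {n : ℕ} (F : V n → V n) : Prop :=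
  ∀ a : V n, a ≠ 0 → ∀ b : V n,
    (Finset.univ.filter (fun x => F x + F (x + a) = b)).card ≤ 2

/-- `F` has algebraic degree exactly 2: all second derivatives vanish
(degree ≤ 2) and some first derivative is non-constant (degree ≥ 2). -/
def IsQuadratic {n : ℕ} (F : V n → V n) : Prop :=
  (∀ x y a : V n,
    F (x + y + a) + F (x + y) + F (x + a) + F x
      + F (y + a) + F y + F a + F 0 = 0) ∧
  (∃ x a : V n, F (x + a) + F x + F a + F 0 ≠ 0)

/-- `Φ` and `φ` describe the sets `B_a(F)` as affine hyperplanes. -/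
def PhiSpec {n : ℕ} (F Φ : V n → V n) (φ : V n → ZMod 2) : Prop :=
  Φ 0 = 0 ∧ φ 0 = 1 ∧
  ∀ a : V n, a ≠ 0 → Φ a ≠ 0 ∧
    {y : V n | ∃ x, F x + F (x + a) = y} = {y : V n | dotp (Φ a) y = φ a}

def wt {n : ℕ} (a : V n) : ℕ := (Finset.univ.filter (fun i => a i = 1)).card

/-- ANF coefficient of `f` at the monomial with support `a` (Möbius inversion). -/
def anfCoeff {n : ℕ} (f : V n → ZMod 2) (a : V n) : ZMod 2 :=
  ∑ x ∈ Finset.univ.filter (fun x : V n => ∀ i, x i = 1 → a i = 1), f x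

/-- Algebraic degree of a Boolean function. -/
def degB {n : ℕ} (f : V n → ZMod 2) : ℕ :=
  Finset.sup (Finset.univ.filter (fun a : V n => anfCoeff f a ≠ 0)) wt

/-- The monomial with support `a`, evaluated at `x`. -/
def mono {n : ℕ} (a x : V n) : ZMod 2 :=
  ∏ i ∈ Finset.univ.filter (fun i => a i = 1), x i

def walsh {n : ℕ} (f : V n → ZMod 2) (u : V n) : ℤ :=
  ∑ x : V n, (-1 : ℤ) ^ ((f x + dotp u x).val)

/-- The associated function `γ_G(a,b) = 1` as a proposition. -/
def gammaP {n : ℕ} (G : V n → V n) (a b : V n) : Prop :=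
  a ≠ 0 ∧ ∃ x, G x + G (x + a) = b

lemma zmod2_cases (c : ZMod 2) : c = 0 ∨ c = 1 := by revert c; decide

lemma neg_one_pow_add' (u v : ZMod 2) :
    (-1 : ℤ) ^ ((u + v).val) = (-1 : ℤ) ^ u.val * (-1 : ℤ) ^ v.val := by
  revert u v; decide

lemma neg_one_pow_sum' {α : Type*} (s : Finset α) (g : α → ZMod 2) :
    (-1 : ℤ) ^ ((∑ i ∈ s, g i).val) = ∏ i ∈ s, (-1 : ℤ) ^ ((g i).val) := by
  induction s using Finset.cons_induction with
  | empty => simp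
  | cons i s hi ih => rw [Finset.sum_cons, Finset.prod_cons, neg_one_pow_add', ih]

lemma sum_zmod2 (d : ZMod 2) :
    (∑ c : ZMod 2, (-1 : ℤ) ^ ((c * d).val)) = if d = 0 then 2 else 0 := by
  revert d; decide

def sA {n : ℕ} (a : V n) : Fin n → Finset (ZMod 2) :=
  fun i => if a i = 1 then Finset.univ else {0}
def sB {n : ℕ} (a : V n) : Fin n → Finset (ZMod 2) :=
  fun i => if a i = 1 then {0} else Finset.univ

lemma filter_le_eq {n : ℕ} (a : V n) :
    Finset.univ.filter (fun x : V n => ∀ i, x i = 1 → a i = 1) = Fintype.piFinset (sA a) := by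
  ext x
  simp only [Finset.mem_filter, Finset.mem_univ, true_and, Fintype.mem_piFinset, sA]
  constructor
  · intro h i
    by_cases hai : a i = 1
    · simp [hai]
    · simp only [hai, if_false, Finset.mem_singleton]
      rcases zmod2_cases (x i) with h0 | h1
      · exact h0
      · exact absurd (h i h1) hai
  · intro h i hxi
    by_cases hai : a i = 1
    · exact hai
    · have := h i
      simp only [hai, if_false, Finset.mem_singleton] at this
      rw [this] at hxi; exact absurd hxi (by decide)

lemma filter_compl_eq {n : ℕ} (a : V n) :
    Finset.univ.filter (fun b : V n => ∀ i, b i = 1 → a i = 0) = Fintype.piFinset (sB a) := by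
  ext b
  simp only [Finset.mem_filter, Finset.mem_univ, true_and, Fintype.mem_piFinset, sB]
  constructor
  · intro h i
    by_cases hai : a i = 1
    · simp only [hai, if_true, Finset.mem_singleton]
      rcases zmod2_cases (b i) with h0 | h1
      · exact h0
      · have := h i h1; rw [hai] at this; exact absurd this (by decide)
    · simp [hai]
  · intro h i hbi
    by_cases hai : a i = 1
    · have := h i
      simp only [hai, if_true, Finset.mem_singleton] at this
      rw [this] at hbi; exact absurd hbi (by decide)
    · rcases zmod2_cases (a i) with h0 | h1
      · exact h0
      · exact absurd h1 hai

lemma wt_le {n : ℕ} (a : V n) : wt a ≤ n := by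
  have := Finset.card_filter_le (Finset.univ : Finset (Fin n)) (fun i => a i = 1)
  simpa [wt] using this

lemma card_neg_filter {n : ℕ} (a : V n) :
    (Finset.univ.filter (fun i : Fin n => ¬ a i = 1)).card = n - wt a := by
  have h := Finset.card_filter_add_card_filter_not
    (s := (Finset.univ : Finset (Fin n))) (p := fun i => a i = 1)
  simp only [Finset.card_univ, Fintype.card_fin] at h
  have : wt a = (Finset.univ.filter (fun i : Fin n => a i = 1)).card := rfl
  omega

lemma char_sum {n : ℕ} (a x : V n) :
    (∑ b ∈ Fintype.piFinset (sB a), (-1 : ℤ) ^ ((dotp b x).val))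
    = if ∀ i, x i = 1 → a i = 1 then 2 ^ (n - wt a) else 0 := by
  have step1 : (∑ b ∈ Fintype.piFinset (sB a), (-1 : ℤ) ^ ((dotp b x).val))
      = ∏ i, ∑ c ∈ sB a i, (-1 : ℤ) ^ ((c * x i).val) := by
    rw [Finset.prod_univ_sum]
    exact Finset.sum_congr rfl fun b _ => by rw [dotp, neg_one_pow_sum']
  rw [step1]
  by_cases h : ∀ i, x i = 1 → a i = 1
  · rw [if_pos h]
    have hfac : ∀ i : Fin n, (∑ c ∈ sB a i, (-1 : ℤ) ^ ((c * x i).val))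
        = if a i = 1 then 1 else 2 := by
      intro i
      by_cases hai : a i = 1
      · simp [sB, hai]
      · have hx : x i = 0 := by
          rcases zmod2_cases (x i) with h0 | h1
          · exact h0
          · exact absurd (h i h1) hai
        simp [sB, hai, sum_zmod2, hx]
    rw [Finset.prod_congr rfl fun i _ => hfac i, Finset.prod_ite (fun _ => (1:ℤ)) (fun _ => 2),
      Finset.prod_const, Finset.prod_const, one_pow, one_mul, card_neg_filter]
  · rw [if_neg h]
    push_neg at h
    obtain ⟨i, hx1, hai⟩ := h
    refine Finset.prod_eq_zero (Finset.mem_univ i) ?_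
    have hx0 : x i ≠ 0 := by rw [hx1]; decide
    simp [sB, hai, sum_zmod2, hx0]

lemma walsh_sum {n : ℕ} (f : V n → ZMod 2) (a : V n) :
    (∑ b ∈ Finset.univ.filter (fun b : V n => ∀ i, b i = 1 → a i = 0), walsh f b)
    = 2 ^ (n - wt a) *
      ∑ x ∈ Finset.univ.filter (fun x : V n => ∀ i, x i = 1 → a i = 1),
        (-1 : ℤ) ^ ((f x).val) := by
  rw [filter_compl_eq]
  unfold walsh
  rw [Finset.sum_comm]
  have key : ∀ x : V n,
      (∑ b ∈ Fintype.piFinset (sB a), (-1 : ℤ) ^ ((f x + dotp b x).val))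
      = (-1 : ℤ) ^ ((f x).val) *
          (if ∀ i, x i = 1 → a i = 1 then 2 ^ (n - wt a) else 0) := by
    intro x
    rw [← char_sum a x, Finset.mul_sum]
    exact Finset.sum_congr rfl fun b _ => neg_one_pow_add' _ _
  rw [Finset.sum_congr rfl fun x _ => key x]
  have : ∀ x : V n, (-1 : ℤ) ^ ((f x).val) *
      (if ∀ i, x i = 1 → a i = 1 then 2 ^ (n - wt a) else 0)
      = (if ∀ i, x i = 1 → a i = 1 then (-1 : ℤ) ^ ((f x).val) * 2 ^ (n - wt a) else 0) := by
    intro x; split <;> simp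
  rw [Finset.sum_congr rfl fun x _ => this x, ← Finset.sum_filter, Finset.mul_sum]
  exact Finset.sum_congr rfl fun x _ => mul_comm _ _

lemma card_T {n : ℕ} (a : V n) :
    (Finset.univ.filter (fun x : V n => ∀ i, x i = 1 → a i = 1)).card = 2 ^ (wt a) := by
  rw [filter_le_eq, Fintype.card_piFinset]
  have : ∀ i : Fin n, (sA a i).card = if a i = 1 then 2 else 1 := by
    intro i; by_cases hai : a i = 1 <;> simp [sA, hai]
  rw [Finset.prod_congr rfl fun i _ => this i, Finset.prod_ite (fun _ => 2) (fun _ => 1),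
    Finset.prod_const, Finset.prod_const, one_pow, mul_one]
  rfl

lemma val_cast2 (u : ZMod 2) : ((u.val : ℕ) : ZMod 2) = u := by revert u; decide

lemma neg_one_pow_ratval (u : ZMod 2) :
    ((-1 : ℚ)) ^ u.val = 1 - 2 * (u.val : ℚ) := by
  rcases zmod2_cases u with h | h <;> subst h
  · norm_num
  · have h1 : (1 : ZMod 2).val = 1 := rfl
    rw [h1]; norm_num

theorem stmt11 {n : ℕ} (f : V n → ZMod 2) (a : V n) (ha : 1 ≤ wt a) :
    ∃ k : ℤ,
      (2 : ℚ) ^ ((wt a : ℤ) - 1)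
        - (2 : ℚ) ^ ((wt a : ℤ) - n - 1) *
            (∑ b ∈ Finset.univ.filter (fun b : V n => ∀ i, b i = 1 → a i = 0), walsh f b)
      = ((anfCoeff f a).val : ℚ) + 2 * k := by
  have hw : wt a ≤ n := wt_le a
  set T := Finset.univ.filter (fun x : V n => ∀ i, x i = 1 → a i = 1) with hT
  set N : ℕ := ∑ x ∈ T, (f x).val with hN
  have hanf : anfCoeff f a = (N : ZMod 2) := by
    rw [anfCoeff, hN, Nat.cast_sum]
    exact Finset.sum_congr rfl fun x _ => (val_cast2 (f x)).symm
  have hval : (anfCoeff f a).val = N % 2 := by rw [hanf, ZMod.val_natCast]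
  have main :
      (2 : ℚ) ^ ((wt a : ℤ) - 1)
        - (2 : ℚ) ^ ((wt a : ℤ) - n - 1) *
            (∑ b ∈ Finset.univ.filter (fun b : V n => ∀ i, b i = 1 → a i = 0), walsh f b)
      = (N : ℚ) := by
    rw [walsh_sum]
    push_cast
    have hS : (∑ x ∈ T, ((-1 : ℚ)) ^ ((f x).val)) = (2 : ℚ) ^ (wt a) - 2 * N := by
      rw [Finset.sum_congr rfl fun x _ => neg_one_pow_ratval (f x), Finset.sum_sub_distrib,
        Finset.sum_const, ← Finset.mul_sum, nsmul_eq_mul, mul_one]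
      rw [hN, Nat.cast_sum]
      have : (T.card : ℚ) = (2 : ℚ) ^ (wt a) := by
        rw [hT, card_T]; push_cast; ring
      rw [this]
    have e1 : (2 : ℚ) ^ ((wt a : ℤ) - 1) = (2 : ℚ) ^ (wt a) * (2 : ℚ)⁻¹ := by
      rw [zpow_sub₀ two_ne_zero, zpow_natCast, zpow_one, div_eq_mul_inv]
    have e2 : (2 : ℚ) ^ ((wt a : ℤ) - n - 1) * (2 : ℚ) ^ ((n - wt a : ℕ)) = (2 : ℚ)⁻¹ := by
      rw [← zpow_natCast (2 : ℚ) (n - wt a), ← zpow_add₀ two_ne_zero, Nat.cast_sub hw]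
      have : ((wt a : ℤ) - n - 1) + ((n : ℤ) - wt a) = -1 := by ring
      rw [this, zpow_neg_one]
    rw [hS, e1, ← mul_assoc, e2]
    ring
  refine ⟨((N / 2 : ℕ) : ℤ), ?_⟩
  rw [main]
  have hsplit : N = (anfCoeff f a).val + 2 * (N / 2) := by omega
  exact_mod_cast congrArg (Nat.cast : ℕ → ℚ) hsplit
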